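/- Fix a prime p, integers n ≥ 1 and b. The number of pairs (k, a) of integers with 0 ≤ a ≤ r(n-1) and b = p^n k + a(p-1), plus the number of triples (j, k, a) with 0 ≤ j ≤ n-2, 1 ≤ a ≤ r(j+1), p ∤ k, and b = p^{j+1} k + a(p-1), equals n if b ≡ 0 (mod p^n) and n-1 otherwise. Here r(m) = Σ_{k=1}^{m} p^k. -/

import Mathlib

/-- Indicator identity used for the telescoping count. -/
lemma stmt3_ind (q Q x y R0 R1 s : ℤ) (hQ : 0 < Q)
    (hx0 : 0 ≤ x) (hxQ : x < Q) (hR0 : 0 ≤ R0) (hR0Q : R0 < Q) (hR1 : R1 = R0 + Q)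
    (hs0 : 0 ≤ s) (hsq : s < q) (hy : y = x + s * Q) :
    (((if 1 ≤ x ∧ x ≠ y then 1 else 0) + (if x ≤ R0 ∧ x + Q ≠ y then 1 else 0) : ℕ))
      + (if y ≤ R1 then 1 else 0)
    = ((if x = 0 then 0 else 1) + (if x ≤ R0 then 1 else 0)) + (if y = 0 then 1 else 0) := by
  have hcase : s = 0 ∨ s = 1 ∨ 2 ≤ s := by omega
  rcases hcase with h | h | h
  · subst h; subst hy; split_ifs <;> omega
  · subst h; subst hy; split_ifs <;> omega
  · have h2 : 2 * Q ≤ s * Q := mul_le_mul_of_nonneg_right h (le_of_lt hQ)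
    subst hy
    generalize hz : s * Q = z at *
    split_ifs <;> omega

/-- geometric partial sum -/
noncomputable def stmt3_e (q : ℤ) : ℕ → ℤ := fun m => ∑ k ∈ Finset.range m, q ^ k

/-- canonical residue of `b * (1-q)⁻¹` mod `q^m` -/
noncomputable def stmt3_c (q b : ℤ) (m : ℕ) : ℤ := (-(b * stmt3_e q m)) % q ^ m

lemma stmt3_geom (q : ℤ) (m : ℕ) : (q - 1) * stmt3_e q m = q ^ m - 1 := by
  rw [stmt3_e, mul_comm]; exact geom_sum_mul q m

section
variable (q b : ℤ) (hq : 2 ≤ q)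
include hq

lemma stmt3_qpow_pos (m : ℕ) : 0 < q ^ m := pow_pos (by linarith) m

lemma stmt3_c_nonneg (m : ℕ) : 0 ≤ stmt3_c q b m :=
  Int.emod_nonneg _ (ne_of_gt (stmt3_qpow_pos q hq m))

lemma stmt3_c_lt (m : ℕ) : stmt3_c q b m < q ^ m :=
  Int.emod_lt_of_pos _ (stmt3_qpow_pos q hq m)

omit hq in
lemma stmt3_c_dvd (m : ℕ) : q ^ m ∣ stmt3_c q b m + b * stmt3_e q m := by
  have h : stmt3_c q b m = -(b * stmt3_e q m) - q ^ m * ((-(b * stmt3_e q m)) / q ^ m) :=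
    Int.emod_def _ _
  exact ⟨-((-(b * stmt3_e q m)) / q ^ m), by linarith⟩

omit hq in
lemma stmt3_dvd_iff (m : ℕ) (a : ℤ) :
    q ^ m ∣ (b - a * (q - 1)) ↔ q ^ m ∣ (a - stmt3_c q b m) := by
  have h1 := stmt3_c_dvd q b m
  have h2 := stmt3_geom q m
  constructor
  · intro h
    have key : a - stmt3_c q b m
        = (b - a * (q - 1)) * stmt3_e q m + a * q ^ m - (stmt3_c q b m + b * stmt3_e q m) := by
      linear_combination a * h2
    rw [key]
    exact dvd_sub (dvd_add (h.mul_right _) (Dvd.intro_left a rfl)) h1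
  · intro h
    have key : b - a * (q - 1)
        = b * q ^ m - (stmt3_c q b m + b * stmt3_e q m) * (q - 1)
          - (a - stmt3_c q b m) * (q - 1) := by
      linear_combination b * h2
    rw [key]
    exact dvd_sub (dvd_sub (Dvd.intro_left b rfl) (h1.mul_right _)) (h.mul_right _)

omit hq in
lemma stmt3_c_succ (m : ℕ) : q ^ m ∣ stmt3_c q b (m + 1) - stmt3_c q b m := by
  have h1 := stmt3_c_dvd q b (m + 1)
  have h2 := stmt3_c_dvd q b m
  have h1' : q ^ m ∣ stmt3_c q b (m+1) + b * stmt3_e q (m+1) :=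
    dvd_trans (pow_dvd_pow q (Nat.le_succ m)) h1
  have he : stmt3_e q (m+1) = stmt3_e q m + q ^ m := by
    rw [stmt3_e]; exact Finset.sum_range_succ _ m
  have key : stmt3_c q b (m+1) - stmt3_c q b m
      = (stmt3_c q b (m+1) + b * stmt3_e q (m+1)) - (stmt3_c q b m + b * stmt3_e q m)
        - b * q ^ m := by
    rw [he]; ring
  rw [key]
  exact dvd_sub (dvd_sub h1' h2) (Dvd.intro_left b rfl)

lemma stmt3_c_zero_iff (m : ℕ) : stmt3_c q b m = 0 ↔ q ^ m ∣ b := by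
  have h := stmt3_dvd_iff q b m 0
  simp only [zero_mul, sub_zero, zero_sub, dvd_neg] at h
  constructor
  · intro h0; exact h.mpr (h0 ▸ dvd_zero _)
  · intro hb
    have hd := h.mp hb
    have h1 := stmt3_c_nonneg q b hq m
    have h2 := stmt3_c_lt q b hq m
    exact Int.eq_zero_of_abs_lt_dvd hd (by rw [abs_of_nonneg h1]; exact h2)

lemma stmt3_ncardA (n : ℕ) (R : ℤ) (hR0 : 0 ≤ R) (hRlt : R < q ^ n) :
    ({ka : ℤ × ℤ | 0 ≤ ka.2 ∧ ka.2 ≤ R ∧ b = q ^ n * ka.1 + ka.2 * (q - 1)}).ncard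
      = if stmt3_c q b n ≤ R then 1 else 0 := by
  have hqn := stmt3_qpow_pos q hq n
  have him : {ka : ℤ × ℤ | 0 ≤ ka.2 ∧ ka.2 ≤ R ∧ b = q ^ n * ka.1 + ka.2 * (q - 1)}
      = (fun a : ℤ => ((b - a * (q - 1)) / q ^ n, a)) ''
        {a : ℤ | 0 ≤ a ∧ a ≤ R ∧ q ^ n ∣ (b - a * (q - 1))} := by
    ext ⟨k, a⟩
    simp only [Set.mem_setOf_eq, Set.mem_image, Prod.mk.injEq]
    constructor
    · rintro ⟨h1, h2, h3⟩
      refine ⟨a, ⟨h1, h2, ⟨k, by linarith⟩⟩, ?_, rfl⟩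
      have hd : b - a * (q - 1) = q ^ n * k := by linarith
      rw [hd, Int.mul_ediv_cancel_left _ (ne_of_gt hqn)]
    · rintro ⟨a', ⟨h1, h2, h3⟩, hk, ha⟩
      subst ha
      refine ⟨h1, h2, ?_⟩
      rw [← hk, Int.mul_ediv_cancel' h3]
      ring
  rw [him, Set.ncard_image_of_injective _ (fun a₁ a₂ h => congrArg Prod.snd h)]
  have hset : {a : ℤ | 0 ≤ a ∧ a ≤ R ∧ q ^ n ∣ (b - a * (q - 1))}
      = if stmt3_c q b n ≤ R then {stmt3_c q b n} else (∅ : Set ℤ) := by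
    have hc0 := stmt3_c_nonneg q b hq n
    have hclt := stmt3_c_lt q b hq n
    ext a
    rw [Set.mem_setOf_eq, stmt3_dvd_iff q b n a]
    split_ifs with h
    · simp only [Set.mem_singleton_iff]
      constructor
      · rintro ⟨h1, h2, h3⟩
        have := Int.eq_zero_of_abs_lt_dvd h3 (by rw [abs_lt]; constructor <;> linarith)
        linarith
      · rintro rfl
        exact ⟨hc0, h, by rw [sub_self]; exact dvd_zero _⟩
    · simp only [Set.mem_empty_iff_false, iff_false, not_and, not_exists]
      rintro h1 h2 h3
      have := Int.eq_zero_of_abs_lt_dvd h3 (by rw [abs_lt]; constructor <;> linarith)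
      omega
  rw [hset]
  split_ifs <;> simp

lemma stmt3_ncardB (n : ℕ) (r : ℕ → ℤ) (hr0 : ∀ m, 0 ≤ r m)
    (hrlt : ∀ m, r m < q ^ (m+1)) (hrs : ∀ m, r (m+1) = r m + q ^ (m+1)) :
    ({jka : ℕ × ℤ × ℤ | jka.1 + 2 ≤ n ∧ 1 ≤ jka.2.2 ∧ jka.2.2 ≤ r (jka.1 + 1) ∧
        ¬ (q ∣ jka.2.1) ∧ b = q ^ (jka.1 + 1) * jka.2.1 + jka.2.2 * (q - 1)}).ncard
    = ∑ j ∈ Finset.range (n-1),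
        (((if 1 ≤ stmt3_c q b (j+1) ∧ stmt3_c q b (j+1) ≠ stmt3_c q b (j+2) then 1 else 0)
        + (if stmt3_c q b (j+1) ≤ r j ∧ stmt3_c q b (j+1) + q^(j+1) ≠ stmt3_c q b (j+2)
            then 1 else 0)) : ℕ) := by
  classical
  have hqpos : (0:ℤ) < q := by linarith
  have hQ : ∀ m : ℕ, (0:ℤ) < q ^ m := stmt3_qpow_pos q hq
  set SB : Set (ℕ × ℤ) := {ja : ℕ × ℤ | ja.1 + 2 ≤ n ∧ 1 ≤ ja.2 ∧ ja.2 ≤ r (ja.1+1) ∧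
      q ^ (ja.1+1) ∣ (b - ja.2 * (q-1)) ∧ ¬ q ^ (ja.1+2) ∣ (b - ja.2 * (q-1))} with hSB
  have him : {jka : ℕ × ℤ × ℤ | jka.1 + 2 ≤ n ∧ 1 ≤ jka.2.2 ∧ jka.2.2 ≤ r (jka.1 + 1) ∧
        ¬ (q ∣ jka.2.1) ∧ b = q ^ (jka.1 + 1) * jka.2.1 + jka.2.2 * (q - 1)}
      = (fun ja : ℕ × ℤ => (ja.1, ((b - ja.2 * (q-1)) / q ^ (ja.1+1), ja.2))) '' SB := by
    ext ⟨j, k, a⟩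
    simp only [hSB, Set.mem_setOf_eq, Set.mem_image, Prod.mk.injEq]
    constructor
    · rintro ⟨h1, h2, h3, h4, h5⟩
      have hd : b - a * (q - 1) = q ^ (j+1) * k := by linarith
      refine ⟨(j, a), ⟨h1, h2, h3, ⟨k, hd⟩, ?_⟩, rfl, ?_, rfl⟩
      · rintro ⟨t, ht⟩
        apply h4
        have : q ^ (j+1) * k = q ^ (j+1) * (q * t) := by
          rw [← hd, ht]; ring
        exact ⟨t, mul_left_cancel₀ (ne_of_gt (hQ (j+1))) this⟩
      · rw [hd, Int.mul_ediv_cancel_left _ (ne_of_gt (hQ (j+1)))]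
    · rintro ⟨⟨j', a'⟩, ⟨h1, h2, h3, h4, h5⟩, hj, hk, ha⟩
      subst hj; subst ha; subst hk
      refine ⟨h1, h2, h3, ?_, ?_⟩
      · rintro ⟨t, ht⟩
        apply h5
        refine ⟨t, ?_⟩
        have := Int.ediv_mul_cancel h4
        calc b - a' * (q - 1) = (b - a' * (q-1)) / q ^ (j'+1) * q ^ (j'+1) := by rw [this]
          _ = q * t * q ^ (j'+1) := by rw [ht]
          _ = q ^ (j'+2) * t := by ring
      · have := Int.ediv_mul_cancel h4
        linarith
  rw [him, Set.ncard_image_of_injective _ ?hinj]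
  case hinj =>
    rintro ⟨j1, a1⟩ ⟨j2, a2⟩ h
    simp only [Prod.mk.injEq] at h
    exact Prod.ext h.1 h.2.2
  set P : ℕ → ℤ → Prop := fun j a => 1 ≤ a ∧ a ≤ r (j+1) ∧ q ^ (j+1) ∣ (b - a * (q-1)) ∧
      ¬ q ^ (j+2) ∣ (b - a * (q-1)) with hP
  set F : ℕ → Finset ℤ := fun j =>
    ({stmt3_c q b (j+1), stmt3_c q b (j+1) + q ^ (j+1)} : Finset ℤ).filter (P j) with hF
  set G : Finset (ℕ × ℤ) := (Finset.range (n-1)).biUnion (fun j => (F j).image (fun a => (j, a)))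
    with hG
  have hSBG : SB = ↑G := by
    ext ⟨j, a⟩
    simp only [hSB, Set.mem_setOf_eq, hG, Finset.coe_biUnion, Finset.coe_image,
      Finset.mem_coe, Finset.mem_range, Set.mem_iUnion, Set.mem_image, hF,
      Finset.mem_filter, Finset.mem_insert, Finset.mem_singleton, hP]
    constructor
    · rintro ⟨h1, h2, h3, h4, h5⟩
      refine ⟨j, by omega, a, ⟨?_, h2, h3, h4, h5⟩, rfl⟩
      obtain ⟨s, hs⟩ := (stmt3_dvd_iff q b (j+1) a).mp h4
      have hc0 := stmt3_c_nonneg q b hq (j+1)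
      have hclt := stmt3_c_lt q b hq (j+1)
      have hb1 : q ^ (j+1) * (-1) < q ^ (j+1) * s := by
        rw [← hs]; linarith [hclt, h2]
      have hb2 : q ^ (j+1) * s < q ^ (j+1) * 2 := by
        rw [← hs]; linarith [hrs j, hrlt j, hc0, h3]
      have hs1 : (-1:ℤ) < s := lt_of_mul_lt_mul_left hb1 (le_of_lt (hQ (j+1)))
      have hs2 : s < 2 := lt_of_mul_lt_mul_left hb2 (le_of_lt (hQ (j+1)))
      interval_cases s
      · left; linarith
      · right; linarith
    · rintro ⟨j', hj', a', ⟨ha', h2, h3, h4, h5⟩, hj⟩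
      obtain ⟨rfl, rfl⟩ : j' = j ∧ a' = a := by
        constructor <;> [exact congrArg Prod.fst hj; exact congrArg Prod.snd hj]
      exact ⟨by omega, h2, h3, h4, h5⟩
  rw [hSBG, Set.ncard_coe_finset, hG]
  rw [Finset.card_biUnion ?hdisj]
  case hdisj =>
    intro x hx y hy hxy
    simp only [Finset.disjoint_left, Finset.mem_image]
    rintro ⟨j1, a1⟩ ⟨c1, hc1, h1⟩ ⟨c2, hc2, h2⟩
    apply hxy
    have := congrArg Prod.fst h1
    have := congrArg Prod.fst h2
    simp_all
  refine Finset.sum_congr rfl ?_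
  intro j hj
  rw [Finset.card_image_of_injective _ (fun a1 a2 h => congrArg Prod.snd h)]
  set u := stmt3_c q b (j+1) with hu
  set v := stmt3_c q b (j+1) + q ^ (j+1) with hv
  have huv : u ≠ v := by have := hQ (j+1); omega
  have hc0 := stmt3_c_nonneg q b hq (j+1)
  have hclt := stmt3_c_lt q b hq (j+1)
  have hc0' := stmt3_c_nonneg q b hq (j+2)
  have hclt' := stmt3_c_lt q b hq (j+2)
  have hqq : q ^ (j+2) = q * q ^ (j+1) := by ring
  have hPu : P j u ↔ (1 ≤ u ∧ u ≠ stmt3_c q b (j+2)) := by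
    rw [hP]
    simp only
    constructor
    · rintro ⟨h1, h2, h3, h4⟩
      refine ⟨h1, fun he => h4 ?_⟩
      rw [stmt3_dvd_iff q b (j+2), he, sub_self]; exact dvd_zero _
    · rintro ⟨h1, h2⟩
      refine ⟨h1, ?_, ?_, ?_⟩
      · have := hrs j; have := hr0 j; linarith
      · rw [stmt3_dvd_iff q b (j+1), sub_self]; exact dvd_zero _
      · rw [stmt3_dvd_iff q b (j+2)]
        intro hd
        have := Int.eq_zero_of_abs_lt_dvd hd (by rw [abs_lt]; constructor <;> nlinarith)
        apply h2; linarith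
  have hPv : P j v ↔ (u ≤ r j ∧ v ≠ stmt3_c q b (j+2)) := by
    rw [hP]
    simp only
    constructor
    · rintro ⟨h1, h2, h3, h4⟩
      refine ⟨by have := hrs j; linarith, fun he => h4 ?_⟩
      rw [stmt3_dvd_iff q b (j+2), he, sub_self]; exact dvd_zero _
    · rintro ⟨h1, h2⟩
      refine ⟨by have := hQ (j+1); linarith, by have := hrs j; linarith, ?_, ?_⟩
      · rw [stmt3_dvd_iff q b (j+1), hv, add_sub_cancel_left]
      · rw [stmt3_dvd_iff q b (j+2)]
        intro hd
        have := Int.eq_zero_of_abs_lt_dvd hd (by rw [abs_lt]; constructor <;> nlinarith)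
        apply h2; linarith
  have hcard : (F j).card = (if P j u then 1 else 0) + (if P j v then 1 else 0) := by
    rw [hF]
    simp only
    rw [show ({u, v} : Finset ℤ) = insert u {v} from rfl, Finset.filter_insert,
      Finset.filter_singleton]
    split_ifs with h1 h2 h2
    · rw [Finset.card_insert_of_notMem (by simp [huv])]; simp
    · simp
    · simp
    · simp
  rw [hcard, if_congr hPu rfl rfl, if_congr hPv rfl rfl]

end

/-- Counting the solutions of `b = p^n k + a(p-1)` with `0 ≤ a ≤ r(n-1)` together with
the solutions of `b = p^{j+1} k + a(p-1)` with `0 ≤ j ≤ n-2`, `1 ≤ a ≤ r(j+1)`, `p ∤ k`: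
the total is `n` if `p^n ∣ b` and `n - 1` otherwise.  Here `r m = ∑_{k=1}^m p^k`. -/
theorem stmt_3 (p : ℕ) (hp : p.Prime) (n : ℕ) (hn : 1 ≤ n) (b : ℤ)
    (r : ℕ → ℤ) (hr : ∀ m, r m = ∑ k ∈ Finset.Icc 1 m, (p : ℤ) ^ k) :
    ({ka : ℤ × ℤ | 0 ≤ ka.2 ∧ ka.2 ≤ r (n - 1) ∧
        b = (p : ℤ) ^ n * ka.1 + ka.2 * ((p : ℤ) - 1)}).ncard +
    ({jka : ℕ × ℤ × ℤ | jka.1 + 2 ≤ n ∧ 1 ≤ jka.2.2 ∧ jka.2.2 ≤ r (jka.1 + 1) ∧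
        ¬ ((p : ℤ) ∣ jka.2.1) ∧
        b = (p : ℤ) ^ (jka.1 + 1) * jka.2.1 + jka.2.2 * ((p : ℤ) - 1)}).ncard
      = if (p : ℤ) ^ n ∣ b then n else n - 1 := by
  have hq : (2:ℤ) ≤ (p:ℤ) := by exact_mod_cast hp.two_le
  have hr0 : r 0 = 0 := by rw [hr]; simp
  have hrs : ∀ m, r (m+1) = r m + (p:ℤ)^(m+1) := fun m => by
    rw [hr, hr, Finset.sum_Icc_succ_top (by omega : 1 ≤ m+1)]
  have hrpos : ∀ m, 0 ≤ r m := by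
    intro m; induction m with
    | zero => rw [hr0]
    | succ k ih => rw [hrs k]; have := stmt3_qpow_pos (p:ℤ) hq (k+1); linarith
  have hrlt : ∀ m, r m < (p:ℤ)^(m+1) := by
    intro m; induction m with
    | zero => rw [hr0]; exact stmt3_qpow_pos _ hq 1
    | succ k ih =>
      rw [hrs k]
      have h1 : ((p:ℤ))^(k+1+1) = (p:ℤ) * (p:ℤ)^(k+1) := by ring
      have h2 := stmt3_qpow_pos (p:ℤ) hq (k+1)
      nlinarith
  have hlt' : r (n-1) < (p:ℤ)^n := by
    have := hrlt (n-1); rwa [show n - 1 + 1 = n from by omega] at this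
  rw [stmt3_ncardA (p:ℤ) b hq n (r (n-1)) (hrpos _) hlt',
    stmt3_ncardB (p:ℤ) b hq n r hrpos hrlt hrs]
  set m := n - 1 with hm
  set φ : ℕ → ℕ := fun j => if stmt3_c (p:ℤ) b (j+1) ≤ r j then 1 else 0 with hφ
  set ψ : ℕ → ℕ := fun j => if stmt3_c (p:ℤ) b (j+1) = 0 then 1 else 0 with hψ
  set χ : ℕ → ℕ := fun j => if stmt3_c (p:ℤ) b (j+1) = 0 then 0 else 1 with hχ
  have hkey : ∀ j : ℕ,
      (((if 1 ≤ stmt3_c (p:ℤ) b (j+1) ∧ stmt3_c (p:ℤ) b (j+1) ≠ stmt3_c (p:ℤ) b (j+2)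
          then 1 else 0)
        + (if stmt3_c (p:ℤ) b (j+1) ≤ r j ∧
              stmt3_c (p:ℤ) b (j+1) + (p:ℤ)^(j+1) ≠ stmt3_c (p:ℤ) b (j+2)
            then 1 else 0)) : ℕ) + φ (j+1)
      = χ j + φ j + ψ (j+1) := by
    intro j
    obtain ⟨s, hs0⟩ := stmt3_c_succ (p:ℤ) b (j+1)
    have hs : stmt3_c (p:ℤ) b (j+2) - stmt3_c (p:ℤ) b (j+1) = (p:ℤ)^(j+1) * s := hs0
    have hQ := stmt3_qpow_pos (p:ℤ) hq (j+1)
    have hc1 := stmt3_c_nonneg (p:ℤ) b hq (j+1)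
    have hc2 := stmt3_c_lt (p:ℤ) b hq (j+1)
    have hc3 := stmt3_c_nonneg (p:ℤ) b hq (j+2)
    have hc4 := stmt3_c_lt (p:ℤ) b hq (j+2)
    have hqq : (p:ℤ)^(j+2) = (p:ℤ)^(j+1) * (p:ℤ) := by ring
    have hb1 : (p:ℤ)^(j+1) * (-1) < (p:ℤ)^(j+1) * s := by rw [← hs]; linarith
    have hb2 : (p:ℤ)^(j+1) * s < (p:ℤ)^(j+1) * (p:ℤ) := by rw [← hs]; linarith
    have hs1 : (-1:ℤ) < s := lt_of_mul_lt_mul_left hb1 (le_of_lt hQ)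
    have hs2 : s < (p:ℤ) := lt_of_mul_lt_mul_left hb2 (le_of_lt hQ)
    simp only [hφ, hχ, hψ]
    exact stmt3_ind (p:ℤ) ((p:ℤ)^(j+1)) (stmt3_c (p:ℤ) b (j+1)) (stmt3_c (p:ℤ) b (j+2))
      (r j) (r (j+1)) s hQ hc1 hc2 (hrpos j) (hrlt j) (hrs j) (by omega) hs2 (by linarith)
  have h1 : (∑ j ∈ Finset.range m,
        (((if 1 ≤ stmt3_c (p:ℤ) b (j+1) ∧ stmt3_c (p:ℤ) b (j+1) ≠ stmt3_c (p:ℤ) b (j+2)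
            then 1 else 0)
          + (if stmt3_c (p:ℤ) b (j+1) ≤ r j ∧
                stmt3_c (p:ℤ) b (j+1) + (p:ℤ)^(j+1) ≠ stmt3_c (p:ℤ) b (j+2)
              then 1 else 0)) : ℕ))
      + (∑ j ∈ Finset.range m, φ (j+1))
      = ((∑ j ∈ Finset.range m, χ j) + (∑ j ∈ Finset.range m, φ j))
        + (∑ j ∈ Finset.range m, ψ (j+1)) := by
    rw [← Finset.sum_add_distrib, ← Finset.sum_add_distrib, ← Finset.sum_add_distrib]
    exact Finset.sum_congr rfl fun j _ => hkey j
  have hshift : ∀ f : ℕ → ℕ,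
      (∑ j ∈ Finset.range m, f (j+1)) + f 0 = (∑ j ∈ Finset.range m, f j) + f m := by
    intro f
    rw [← Finset.sum_range_succ' f m, Finset.sum_range_succ]
  have hsφ := hshift φ
  have hsψ := hshift ψ
  have hχψ : (∑ j ∈ Finset.range m, χ j) + (∑ j ∈ Finset.range m, ψ j) = m := by
    rw [← Finset.sum_add_distrib]
    have h2 : ∀ j ∈ Finset.range m, χ j + ψ j = 1 := by
      intro j _
      simp only [hχ, hψ]
      split_ifs <;> omega
    rw [Finset.sum_congr rfl h2, Finset.sum_const, Finset.card_range, smul_eq_mul, mul_one]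
  have hφψ0 : φ 0 = ψ 0 := by
    simp only [hφ, hψ, hr0]
    have h3 := stmt3_c_nonneg (p:ℤ) b hq (0+1)
    split_ifs <;> omega
  have hφm : φ m = (if stmt3_c (p:ℤ) b n ≤ r m then 1 else 0) := by
    simp only [hφ]
    rw [show m + 1 = n from by omega]
  have hψm : ψ m = (if stmt3_c (p:ℤ) b n = 0 then 1 else 0) := by
    simp only [hψ]
    rw [show m + 1 = n from by omega]
  have hRHS : (if (p:ℤ)^n ∣ b then n else m) = m + ψ m := by
    rw [hψm]
    by_cases hb : (p:ℤ)^n ∣ b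
    · rw [if_pos hb, if_pos ((stmt3_c_zero_iff (p:ℤ) b hq n).mpr hb)]; omega
    · rw [if_neg hb, if_neg (fun h => hb ((stmt3_c_zero_iff (p:ℤ) b hq n).mp h))]; omega
  rw [← hφm, hRHS]
  generalize hS : (∑ j ∈ Finset.range m,
        (((if 1 ≤ stmt3_c (p:ℤ) b (j+1) ∧ stmt3_c (p:ℤ) b (j+1) ≠ stmt3_c (p:ℤ) b (j+2)
            then 1 else 0)
          + (if stmt3_c (p:ℤ) b (j+1) ≤ r j ∧
                stmt3_c (p:ℤ) b (j+1) + (p:ℤ)^(j+1) ≠ stmt3_c (p:ℤ) b (j+2)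
              then 1 else 0)) : ℕ)) = S at h1 ⊢
  clear_value φ ψ χ m
  linarith [h1, hsφ, hsψ, hχψ, hφψ0]
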